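/- Let H be a Hilbert space, β, r > 0 and let F : H → H be Lipschitz with constant L_F where r > L_F/β + 1. Given x, x̃, y, ỹ, λ, λ̃ ∈ H with λ − λ̃ = β(x̃ − ỹ), set ζ_x = F(x) − F(x̃) + β(x − x̃), and define φ = ⟨λ − λ̃, ỹ − y⟩ + βr⟨x − x̃, x − x̃ − ζ_x/(βr)⟩ + β⟨y − ỹ, y − ỹ⟩ + (1/β)⟨λ − λ̃, λ − λ̃⟩, and d with ‖d‖²_G = βr‖x − x̃ − ζ_x/(βr)‖² + β‖y − ỹ‖² + (1/β)‖λ − λ̃‖². Then φ ≥ (β/2)‖y − x̃‖² + (1/2)‖d‖²_G ≥ (1/2)‖d‖²_G. -/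

import Mathlib

open RealInnerProductSpace

/-- The key estimate for the prediction step of the prediction–correction ADMM:
with `λ − λ̃ = β(x̃ − ỹ)` and `ζ = F(x) − F(x̃) + β(x − x̃)`,
`φ ≥ (β/2)‖y − x̃‖² + (1/2)‖d‖²_G ≥ (1/2)‖d‖²_G`. -/
theorem prediction_correction_phi_lower_bound
    {H : Type*} [NormedAddCommGroup H] [InnerProductSpace ℝ H]
    (F : H → H) (L_F β r : ℝ) (hL : 0 < L_F) (hβ : 0 < β)
    (hLip : ∀ a b : H, ‖F a - F b‖ ≤ L_F * ‖a - b‖)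
    (hr : r > L_F / β + 1)
    (x x' y y' l l' : H)
    (hl : l - l' = β • (x' - y')) :
    let ζ : H := F x - F x' + β • (x - x')
    let φ : ℝ := ⟪l - l', y' - y⟫
      + β * r * ⟪x - x', x - x' - (β * r)⁻¹ • ζ⟫
      + β * ⟪y - y', y - y'⟫ + β⁻¹ * ⟪l - l', l - l'⟫
    let dG : ℝ := β * r * ‖x - x' - (β * r)⁻¹ • ζ‖ ^ 2
      + β * ‖y - y'‖ ^ 2 + β⁻¹ * ‖l - l'‖ ^ 2
    β / 2 * ‖y - x'‖ ^ 2 + 1 / 2 * dG ≤ φ ∧ 1 / 2 * dG ≤ φ := by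
  intro ζ φ dG
  have hrβ : L_F + β < β * r := by
    have := (div_lt_iff₀ hβ).mp (by linarith : L_F / β < r - 1)
    nlinarith
  have hβr : 0 < β * r := lt_trans (by linarith) hrβ
  have hζn : ‖ζ‖ ≤ (β * r) * ‖x - x'‖ := by
    calc ‖ζ‖ ≤ ‖F x - F x'‖ + ‖β • (x - x')‖ := norm_add_le _ _
    _ ≤ L_F * ‖x - x'‖ + β * ‖x - x'‖ := by
        rw [norm_smul, Real.norm_of_nonneg hβ.le]
        exact add_le_add_left (hLip x x') _
    _ ≤ (β * r) * ‖x - x'‖ := by nlinarith [norm_nonneg (x - x')]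
  have hkey : ‖ζ‖ ^ 2 ≤ (β * r) ^ 2 * ‖x - x'‖ ^ 2 := by
    nlinarith [norm_nonneg (x - x'), norm_nonneg ζ]
  set c := (β * r)⁻¹ with hc
  have hcβr : (β * r) * c = 1 := mul_inv_cancel₀ hβr.ne'
  have h1 : ⟪x - x', x - x' - c • ζ⟫ = ‖x - x'‖ ^ 2 - c * ⟪x - x', ζ⟫ := by
    rw [inner_sub_right, real_inner_smul_right, real_inner_self_eq_norm_sq]
  have h2 : ‖x - x' - c • ζ‖ ^ 2
      = ‖x - x'‖ ^ 2 - 2 * (c * ⟪x - x', ζ⟫) + c ^ 2 * ‖ζ‖ ^ 2 := by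
    rw [norm_sub_sq_real, real_inner_smul_right, norm_smul,
      Real.norm_of_nonneg (inv_nonneg.mpr hβr.le)]
    ring
  have h3 : ⟪l - l', y' - y⟫ = -(β * ⟪y - y', x' - y'⟫) := by
    rw [hl, real_inner_smul_left, real_inner_comm, ← neg_sub y y',
      inner_neg_left]
    ring
  have h4 : ⟪l - l', l - l'⟫ = β ^ 2 * ‖x' - y'‖ ^ 2 := by
    rw [hl, real_inner_smul_left, real_inner_smul_right,
      real_inner_self_eq_norm_sq]; ring
  have h5 : ⟪y - y', y - y'⟫ = ‖y - y'‖ ^ 2 := real_inner_self_eq_norm_sq _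
  have h6 : ‖y - x'‖ ^ 2
      = ‖y - y'‖ ^ 2 - 2 * ⟪y - y', x' - y'⟫ + ‖x' - y'‖ ^ 2 := by
    have : y - x' = (y - y') - (x' - y') := by abel
    rw [this, norm_sub_sq_real]
  have hβinv : β⁻¹ * β ^ 2 = β := by
    rw [sq, ← mul_assoc, inv_mul_cancel₀ hβ.ne', one_mul]
  have hmain : φ - (β / 2 * ‖y - x'‖ ^ 2 + 1 / 2 * dG)
      = (β * r) / 2 * ‖x - x'‖ ^ 2 - c / 2 * ‖ζ‖ ^ 2 := by
    show (⟪l - l', y' - y⟫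
      + β * r * ⟪x - x', x - x' - c • ζ⟫
      + β * ⟪y - y', y - y'⟫ + β⁻¹ * ⟪l - l', l - l'⟫)
      - (β / 2 * ‖y - x'‖ ^ 2 + 1 / 2 * (β * r * ‖x - x' - c • ζ‖ ^ 2
      + β * ‖y - y'‖ ^ 2 + β⁻¹ * ‖l - l'‖ ^ 2)) = _
    rw [h1, h2, h3, h4, h5, h6, ← real_inner_self_eq_norm_sq (l - l'), h4]
    have hcc : β * r * (c ^ 2 * ‖ζ‖ ^ 2) = c * ‖ζ‖ ^ 2 := by
      rw [pow_two, ← mul_assoc, ← mul_assoc, hcβr, one_mul]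
    linear_combination (-(1 / 2 : ℝ)) * hcc + (‖x' - y'‖ ^ 2 / 2) * hβinv
  have hpos : 0 ≤ (β * r) / 2 * ‖x - x'‖ ^ 2 - c / 2 * ‖ζ‖ ^ 2 := by
    have : c / 2 * ‖ζ‖ ^ 2 ≤ c / 2 * ((β * r) ^ 2 * ‖x - x'‖ ^ 2) :=
      mul_le_mul_of_nonneg_left hkey (by positivity)
    have h7 : c / 2 * ((β * r) ^ 2 * ‖x - x'‖ ^ 2) = (β * r) / 2 * ‖x - x'‖ ^ 2 := by
      rw [pow_two, ← mul_assoc]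
      rw [show c / 2 * (β * r * (β * r)) = β * r * c * (β * r) / 2 by ring,
        hcβr, one_mul]
    linarith [h7 ▸ this]
  have hW : 0 ≤ β / 2 * ‖y - x'‖ ^ 2 := by positivity
  constructor
  · linarith
  · linarith
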